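/- Let β > 0, let w be a weight on (a,b) with 0 < W(x) := ∫_x^b w < ∞ for all x ∈ (a,b), and let {x_k}_{k=N}^∞ be a discretizing sequence of W (i.e. a strictly increasing sequence in [a,b] with W(x_k) ≈ 2^{−k}). Then for every nonnegative non-decreasing function h on (a,b) and every n ≥ N: ∫_{x_n}^b W(x)^{β−1} w(x) h(x) dx ≈ Σ_{k=n+1}^∞ 2^{−kβ} h(x_k), with constants depending only on β and the discretization constants. -/

import Mathlib

open MeasureTheory Set ENNReal

/-- The interval `(x, y)` in `ℝ` with extended-real endpoints. -/
def erIoo (x y : EReal) : Set ℝ := {t : ℝ | x < (t : EReal) ∧ (t : EReal) < y}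

/-- `W(x) = ∫_x^b w`. -/
noncomputable def Wf (w : ℝ → ℝ≥0∞) (b : EReal) (x : ℝ) : ℝ≥0∞ :=
  ∫⁻ t in erIoo (x : EReal) b, w t

lemma mem_erIoo_iff {x y : EReal} {t : ℝ} : t ∈ erIoo x y ↔ x < (t : EReal) ∧ (t : EReal) < y :=
  Iff.rfl

lemma measurableSet_erIoo (x y : EReal) : MeasurableSet (erIoo x y) := by
  have h : erIoo x y = Real.toEReal ⁻¹' (Set.Ioo x y) := rfl
  rw [h]
  exact (continuous_coe_real_ereal.measurable) measurableSet_Ioo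

lemma Wf_antitone (w : ℝ → ℝ≥0∞) (b : EReal) : Antitone (Wf w b) := by
  intro x y hxy
  apply lintegral_mono_set
  intro t ht
  exact ⟨lt_of_le_of_lt (by exact_mod_cast hxy) ht.1, ht.2⟩

lemma Wf_measurable (w : ℝ → ℝ≥0∞) (b : EReal) : Measurable (Wf w b) :=
  (Wf_antitone w b).measurable

lemma rpow_upper {u : ℝ≥0∞} {p q r : ℝ} (hp : 0 < p) (hq : 0 < q)
    (h1 : ENNReal.ofReal p ≤ u) (h2 : u ≤ ENNReal.ofReal q) :
    u ^ r ≤ ENNReal.ofReal (max (p ^ r) (q ^ r)) := by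
  rcases le_or_gt 0 r with hr | hr
  · calc u ^ r ≤ (ENNReal.ofReal q) ^ r := ENNReal.rpow_le_rpow h2 hr
      _ = ENNReal.ofReal (q ^ r) := ENNReal.ofReal_rpow_of_pos hq
      _ ≤ _ := ENNReal.ofReal_le_ofReal (le_max_right _ _)
  · have h3 : (ENNReal.ofReal p) ^ (-r) ≤ u ^ (-r) :=
      ENNReal.rpow_le_rpow h1 (by linarith)
    have h4 : u ^ r ≤ (ENNReal.ofReal p) ^ r := by
      rw [← neg_neg r, ENNReal.rpow_neg u, ENNReal.rpow_neg (ENNReal.ofReal p)]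
      exact ENNReal.inv_le_inv.2 h3
    calc u ^ r ≤ (ENNReal.ofReal p) ^ r := h4
      _ = ENNReal.ofReal (p ^ r) := ENNReal.ofReal_rpow_of_pos hp
      _ ≤ _ := ENNReal.ofReal_le_ofReal (le_max_left _ _)

lemma rpow_lower {u : ℝ≥0∞} {p q r : ℝ} (hp : 0 < p) (hq : 0 < q)
    (h1 : ENNReal.ofReal p ≤ u) (h2 : u ≤ ENNReal.ofReal q) :
    ENNReal.ofReal (min (p ^ r) (q ^ r)) ≤ u ^ r := by
  rcases le_or_gt 0 r with hr | hr
  · calc ENNReal.ofReal (min (p ^ r) (q ^ r)) ≤ ENNReal.ofReal (p ^ r) :=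
        ENNReal.ofReal_le_ofReal (min_le_left _ _)
      _ = (ENNReal.ofReal p) ^ r := (ENNReal.ofReal_rpow_of_pos hp).symm
      _ ≤ u ^ r := ENNReal.rpow_le_rpow h1 hr
  · have h3 : u ^ (-r) ≤ (ENNReal.ofReal q) ^ (-r) :=
      ENNReal.rpow_le_rpow h2 (by linarith)
    have h4 : (ENNReal.ofReal q) ^ r ≤ u ^ r := by
      rw [← neg_neg r, ENNReal.rpow_neg u, ENNReal.rpow_neg (ENNReal.ofReal q)]
      exact ENNReal.inv_le_inv.2 h3
    calc ENNReal.ofReal (min (p ^ r) (q ^ r)) ≤ ENNReal.ofReal (q ^ r) :=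
        ENNReal.ofReal_le_ofReal (min_le_right _ _)
      _ = (ENNReal.ofReal q) ^ r := (ENNReal.ofReal_rpow_of_pos hq).symm
      _ ≤ u ^ r := h4

lemma real_split (c : ℝ) (hc : 0 ≤ c) (s t : ℝ) :
    (c * 2 ^ s) ^ t = c ^ t * 2 ^ (s * t) := by
  rw [Real.mul_rpow hc (by positivity), ← Real.rpow_mul (by norm_num : (0:ℝ) ≤ 2)]

theorem antidiscretization_integral (β c₁ c₂ : ℝ) (hβ : 0 < β) (hc₁ : 0 < c₁) (hc₂ : 0 < c₂) :
    ∃ c C : ℝ, 0 < c ∧ 0 < C ∧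
      ∀ (a : ℝ) (b : EReal), (a : EReal) < b → ∀ (w : ℝ → ℝ≥0∞), Measurable w →
        ∀ (N : WithBot ℤ) (xs : ℤ → ℝ),
        (∀ x : ℝ, x ∈ erIoo (a : EReal) b → 0 < Wf w b x ∧ Wf w b x < ∞) →
        (∀ k : ℤ, N ≤ (k : WithBot ℤ) → a ≤ xs k ∧ (xs k : EReal) ≤ b) →
        (∀ j k : ℤ, N ≤ (j : WithBot ℤ) → j < k → xs j < xs k) →
        (∀ k : ℤ, N ≤ (k : WithBot ℤ) →
          ENNReal.ofReal c₁ * (2 : ℝ≥0∞) ^ (-(k : ℝ)) ≤ Wf w b (xs k) ∧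
            Wf w b (xs k) ≤ ENNReal.ofReal c₂ * (2 : ℝ≥0∞) ^ (-(k : ℝ))) →
        (∀ n : ℤ, N = (n : WithBot ℤ) → xs n = a) →
        ∀ (h : ℝ → ℝ≥0∞), Measurable h → MonotoneOn h (erIoo (a : EReal) b) →
          ∀ n : ℤ, N ≤ (n : WithBot ℤ) →
            ENNReal.ofReal c *
                (∑' k : {k : ℤ // n + 1 ≤ k}, (2 : ℝ≥0∞) ^ (-((k : ℤ) : ℝ) * β) * h (xs k)) ≤
              (∫⁻ x in erIoo ((xs n : ℝ) : EReal) b, Wf w b x ^ (β - 1) * w x * h x) ∧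
            (∫⁻ x in erIoo ((xs n : ℝ) : EReal) b, Wf w b x ^ (β - 1) * w x * h x) ≤
              ENNReal.ofReal C *
                (∑' k : {k : ℤ // n + 1 ≤ k}, (2 : ℝ≥0∞) ^ (-((k : ℤ) : ℝ) * β) * h (xs k)) := by
  -- choose the gap m
  obtain ⟨m₀, hm₀⟩ : ∃ m : ℕ, 2 * c₂ / c₁ < 2 ^ m := pow_unbounded_of_one_lt _ one_lt_two
  set m : ℕ := m₀ + 1 with hm_def
  have hmge : 2 * c₂ ≤ c₁ * 2 ^ m := by
    have h2 : (2:ℝ) ^ m₀ ≤ 2 ^ m := pow_le_pow_right₀ one_le_two (by omega)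
    have h3 := (div_lt_iff₀ hc₁).1 hm₀
    nlinarith
  have hm1 : 1 ≤ m := by omega
  have hmR : (0:ℝ) < m := by exact_mod_cast hm1
  -- constants
  set D₂ : ℝ := max ((c₁ / 2) ^ (β - 1)) (c₂ ^ (β - 1)) with hD₂def
  set D₁ : ℝ := min ((c₁ * (2:ℝ) ^ (-(m:ℝ))) ^ (β - 1)) (c₂ ^ (β - 1)) with hD₁def
  have hD₂pos : 0 < D₂ := lt_max_of_lt_left (Real.rpow_pos_of_pos (by positivity) _)
  have hD₁pos : 0 < D₁ :=
    lt_min (Real.rpow_pos_of_pos (by positivity) _) (Real.rpow_pos_of_pos hc₂ _)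
  set K : ℝ := D₁ * (c₁ / 2) with hKdef
  have hKpos : 0 < K := by positivity
  have hcrpos : 0 < (K⁻¹ * (2 * m))⁻¹ :=
    inv_pos.2 (mul_pos (inv_pos.2 hKpos) (by linarith))
  refine ⟨(K⁻¹ * (2 * m))⁻¹, D₂ * c₂ * 2 ^ β, hcrpos, by positivity, ?_⟩
  intro a b hab w hw N xs hW hmem hsm hWk hNa h hh hmono n hn
  set W := Wf w b with hWdef
  have hWanti : Antitone W := Wf_antitone w b
  have hWmeas : Measurable W := Wf_measurable w b
  have hgmeas : Measurable fun x => W x ^ (β - 1) * w x * h x :=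
    ((hWmeas.pow_const _).mul hw).mul hh
  have two2 : ∀ s : ℝ, (2:ℝ≥0∞) ^ s = ENNReal.ofReal ((2:ℝ) ^ s) := fun s => by
    rw [← ENNReal.ofReal_rpow_of_pos two_pos]; norm_num
  have hNk : ∀ k : ℤ, n ≤ k → N ≤ (k : WithBot ℤ) := fun k hk =>
    le_trans hn (by exact_mod_cast hk)
  have hmono_le : ∀ j k : ℤ, N ≤ (j : WithBot ℤ) → j ≤ k → xs j ≤ xs k := by
    intro j k hj hjk
    rcases eq_or_lt_of_le hjk with rfl | hlt
    · exact le_rfl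
    · exact (hsm j k hj hlt).le
  have hWlow : ∀ k : ℤ, N ≤ (k : WithBot ℤ) →
      ENNReal.ofReal (c₁ * 2 ^ (-(k:ℝ))) ≤ W (xs k) := by
    intro k hk
    have h1 := (hWk k hk).1
    rwa [two2, ← ENNReal.ofReal_mul hc₁.le] at h1
  have hWhigh : ∀ k : ℤ, N ≤ (k : WithBot ℤ) →
      W (xs k) ≤ ENNReal.ofReal (c₂ * 2 ^ (-(k:ℝ))) := by
    intro k hk
    have h1 := (hWk k hk).2
    rwa [two2, ← ENNReal.ofReal_mul hc₂.le] at h1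
  have hxb : ∀ k : ℤ, N ≤ (k : WithBot ℤ) → (xs k : EReal) < b := by
    intro k hk
    by_contra hle
    push_neg at hle
    have hempty : erIoo (xs k : EReal) b = ∅ := by
      ext t
      simp only [mem_erIoo_iff, mem_empty_iff_false, iff_false, not_and]
      intro h1 h2
      exact absurd (lt_trans h1 (lt_of_lt_of_le h2 hle)) (lt_irrefl _)
    have h0 : W (xs k) = 0 := by
      rw [hWdef]
      show (∫⁻ t in erIoo ((xs k : ℝ) : EReal) b, w t) = 0
      rw [hempty]
      simp
    have h2 := hWlow k hk
    rw [h0] at h2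
    have hpos : 0 < ENNReal.ofReal (c₁ * 2 ^ (-(k:ℝ))) := ENNReal.ofReal_pos.2 (by positivity)
    exact hpos.not_ge h2
  have hx_mem : ∀ k j : ℤ, n ≤ k → k < j → ∀ x ∈ Ioo (xs k) (xs j),
      x ∈ erIoo (a : EReal) b := by
    intro k j hk hkj x hx
    constructor
    · have h1 : a ≤ xs k := le_trans (hmem n hn).1 (hmono_le n k hn hk)
      exact_mod_cast lt_of_le_of_lt h1 hx.1
    · exact lt_of_lt_of_le (by exact_mod_cast hx.2) (hmem j (hNk j (by omega))).2
  have hmemk : ∀ k : ℤ, n + 1 ≤ k → xs k ∈ erIoo (a : EReal) b := by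
    intro k hk
    constructor
    · have h1 : a < xs k := lt_of_le_of_lt (hmem n hn).1 (hsm n k hn (by omega))
      exact_mod_cast h1
    · exact hxb k (hNk k (by omega))
  constructor
  · -- LOWER BOUND
    have lower_piece : ∀ k : ℤ, n + 1 ≤ k →
        ENNReal.ofReal (2 ^ (-(k:ℝ) * β)) * h (xs k) ≤
          ENNReal.ofReal K⁻¹ *
            ∫⁻ x in Ioo (xs k) (xs (k + m)), W x ^ (β - 1) * w x * h x := by
      intro k hk
      have hNk' : N ≤ (k : WithBot ℤ) := hNk k (by omega)
      have hNkm : N ≤ ((k + m : ℤ) : WithBot ℤ) := hNk _ (by omega)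
      have hcastm : (((k + (m:ℤ)) : ℤ) : ℝ) = (k:ℝ) + (m:ℝ) := by push_cast; ring
      -- mass estimate
      have hreal : c₂ * 2 ^ (-((k:ℝ) + (m:ℝ))) ≤ c₁ / 2 * 2 ^ (-(k:ℝ)) := by
        have h2m : (2:ℝ) ^ (-((k:ℝ) + (m:ℝ))) = 2 ^ (-(k:ℝ)) * ((2:ℝ) ^ (m:ℕ))⁻¹ := by
          rw [show -((k:ℝ) + (m:ℝ)) = -(k:ℝ) + -(m:ℝ) by ring, Real.rpow_add two_pos,
            Real.rpow_neg (by norm_num : (0:ℝ) ≤ 2) (m:ℝ), Real.rpow_natCast]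
        rw [h2m]
        have hp1 : (0:ℝ) < 2 ^ (-(k:ℝ)) := Real.rpow_pos_of_pos two_pos _
        have hp2 : (0:ℝ) < (2:ℝ) ^ (m:ℕ) := by positivity
        have h4 := mul_le_mul_of_nonneg_right hmge (mul_pos hp1 (inv_pos.2 hp2)).le
        calc c₂ * (2 ^ (-(k:ℝ)) * ((2:ℝ) ^ (m:ℕ))⁻¹)
            = (2 * c₂) * (2 ^ (-(k:ℝ)) * ((2:ℝ) ^ (m:ℕ))⁻¹) / 2 := by ring
          _ ≤ (c₁ * 2 ^ (m:ℕ)) * (2 ^ (-(k:ℝ)) * ((2:ℝ) ^ (m:ℕ))⁻¹) / 2 := by linarith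
          _ = c₁ / 2 * 2 ^ (-(k:ℝ)) := by field_simp
      have hmass : ENNReal.ofReal (c₁ / 2 * 2 ^ (-(k:ℝ))) ≤
          ∫⁻ x in Ioo (xs k) (xs (k + m)), w x := by
        have hdecomp : erIoo (xs k : EReal) b ⊆
            (Ioo (xs k) (xs (k + m)) ∪ {xs (k + m)}) ∪ erIoo (xs (k + m) : EReal) b := by
          intro t ht
          rcases lt_trichotomy t (xs (k + m)) with h1 | h1 | h1
          · exact Or.inl (Or.inl ⟨by exact_mod_cast ht.1, h1⟩)
          · exact Or.inl (Or.inr h1)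
          · exact Or.inr ⟨by exact_mod_cast h1, ht.2⟩
        have hWk_le : W (xs k) ≤ (∫⁻ x in Ioo (xs k) (xs (k + m)), w x) +
            ENNReal.ofReal (c₂ * 2 ^ (-((k:ℝ) + (m:ℝ)))) := by
          have hWkm := hWhigh (k + m) hNkm
          rw [hcastm] at hWkm
          calc W (xs k) ≤ ∫⁻ x in (Ioo (xs k) (xs (k + m)) ∪ {xs (k + m)}) ∪
                erIoo (xs (k + m) : EReal) b, w x := lintegral_mono_set hdecomp
            _ ≤ (∫⁻ x in Ioo (xs k) (xs (k + m)) ∪ {xs (k + m)}, w x) +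
                ∫⁻ x in erIoo (xs (k + m) : EReal) b, w x := lintegral_union_le _ _ _
            _ ≤ ((∫⁻ x in Ioo (xs k) (xs (k + m)), w x) + ∫⁻ x in {xs (k + m)}, w x) +
                W (xs (k + m)) := add_le_add (lintegral_union_le _ _ _) le_rfl
            _ = (∫⁻ x in Ioo (xs k) (xs (k + m)), w x) + W (xs (k + m)) := by
                rw [setLIntegral_measure_zero _ _ (measure_singleton _), add_zero]
            _ ≤ _ := add_le_add le_rfl hWkm
        have hstep : ENNReal.ofReal (c₁ / 2 * 2 ^ (-(k:ℝ))) + ENNReal.ofReal (c₁ / 2 * 2 ^ (-(k:ℝ)))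
            ≤ (∫⁻ x in Ioo (xs k) (xs (k + m)), w x) + ENNReal.ofReal (c₁ / 2 * 2 ^ (-(k:ℝ))) := by
          calc ENNReal.ofReal (c₁ / 2 * 2 ^ (-(k:ℝ))) + ENNReal.ofReal (c₁ / 2 * 2 ^ (-(k:ℝ)))
              = ENNReal.ofReal (c₁ * 2 ^ (-(k:ℝ))) := by
                rw [← ENNReal.ofReal_add (by positivity) (by positivity)]
                congr 1; ring
            _ ≤ W (xs k) := hWlow k hNk'
            _ ≤ (∫⁻ x in Ioo (xs k) (xs (k + m)), w x) +
                ENNReal.ofReal (c₂ * 2 ^ (-((k:ℝ) + (m:ℝ)))) := hWk_le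
            _ ≤ _ := add_le_add le_rfl (ENNReal.ofReal_le_ofReal hreal)
        exact (ENNReal.add_le_add_iff_right ENNReal.ofReal_ne_top).1 hstep
      -- pointwise estimate
      have hxk_mem := hmemk k hk
      have hpt : ∀ x ∈ Ioo (xs k) (xs (k + m)),
          (ENNReal.ofReal (D₁ * 2 ^ (-(k:ℝ) * (β - 1))) * h (xs k)) * w x ≤
            W x ^ (β - 1) * w x * h x := by
        intro x hx
        have hxab : x ∈ erIoo (a : EReal) b := hx_mem k (k + m) (by omega) (by omega) x hx
        have hWle : W x ≤ ENNReal.ofReal (c₂ * 2 ^ (-(k:ℝ))) :=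
          le_trans (hWanti hx.1.le) (hWhigh k hNk')
        have hWge : ENNReal.ofReal ((c₁ * 2 ^ (-(m:ℝ))) * 2 ^ (-(k:ℝ))) ≤ W x := by
          refine le_trans ?_ (hWanti hx.2.le)
          have h1 := hWlow (k + m) hNkm
          rw [hcastm] at h1
          refine le_trans (le_of_eq ?_) h1
          rw [show -((k:ℝ) + (m:ℝ)) = -(m:ℝ) + -(k:ℝ) by ring, Real.rpow_add two_pos]
          ring_nf
        have hWr : ENNReal.ofReal (D₁ * 2 ^ (-(k:ℝ) * (β - 1))) ≤ W x ^ (β - 1) := by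
          refine le_trans ?_ (rpow_lower (by positivity) (by positivity) hWge hWle)
          apply ENNReal.ofReal_le_ofReal
          apply le_min
          · rw [real_split _ (by positivity)]
            exact mul_le_mul_of_nonneg_right
              (by rw [hD₁def]; exact min_le_left _ _) (by positivity)
          · rw [real_split _ hc₂.le]
            exact mul_le_mul_of_nonneg_right
              (by rw [hD₁def]; exact min_le_right _ _) (by positivity)
        have hhx : h (xs k) ≤ h x := hmono hxk_mem hxab hx.1.le
        calc (ENNReal.ofReal (D₁ * 2 ^ (-(k:ℝ) * (β - 1))) * h (xs k)) * w x
            ≤ (W x ^ (β - 1) * h x) * w x := mul_le_mul' (mul_le_mul' hWr hhx) le_rfl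
          _ = W x ^ (β - 1) * w x * h x := by ring
      have hint : ENNReal.ofReal (K * 2 ^ (-(k:ℝ) * β)) * h (xs k) ≤
          ∫⁻ x in Ioo (xs k) (xs (k + m)), W x ^ (β - 1) * w x * h x := by
        have hre : D₁ * 2 ^ (-(k:ℝ) * (β - 1)) * (c₁ / 2 * 2 ^ (-(k:ℝ))) =
            K * 2 ^ (-(k:ℝ) * β) := by
          have e1 : (2:ℝ) ^ (-(k:ℝ) * (β - 1)) * (2:ℝ) ^ (-(k:ℝ)) = 2 ^ (-(k:ℝ) * β) := by
            rw [← Real.rpow_add two_pos]; congr 1; ring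
          calc D₁ * 2 ^ (-(k:ℝ) * (β - 1)) * (c₁ / 2 * 2 ^ (-(k:ℝ)))
              = D₁ * (c₁ / 2) * (2 ^ (-(k:ℝ) * (β - 1)) * 2 ^ (-(k:ℝ))) := by ring
            _ = K * 2 ^ (-(k:ℝ) * β) := by rw [e1, hKdef]
        calc ENNReal.ofReal (K * 2 ^ (-(k:ℝ) * β)) * h (xs k)
            = (ENNReal.ofReal (D₁ * 2 ^ (-(k:ℝ) * (β - 1))) * h (xs k)) *
              ENNReal.ofReal (c₁ / 2 * 2 ^ (-(k:ℝ))) := by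
              rw [show ∀ X Y Z : ℝ≥0∞, (X * Y) * Z = (X * Z) * Y from fun X Y Z => by ring,
                ← ENNReal.ofReal_mul (by positivity), hre]
          _ ≤ (ENNReal.ofReal (D₁ * 2 ^ (-(k:ℝ) * (β - 1))) * h (xs k)) *
              ∫⁻ x in Ioo (xs k) (xs (k + m)), w x := mul_le_mul' le_rfl hmass
          _ = ∫⁻ x in Ioo (xs k) (xs (k + m)),
              (ENNReal.ofReal (D₁ * 2 ^ (-(k:ℝ) * (β - 1))) * h (xs k)) * w x :=
              (lintegral_const_mul _ hw).symm
          _ ≤ _ := setLIntegral_mono hgmeas hpt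
      calc ENNReal.ofReal (2 ^ (-(k:ℝ) * β)) * h (xs k)
          = ENNReal.ofReal K⁻¹ * (ENNReal.ofReal (K * 2 ^ (-(k:ℝ) * β)) * h (xs k)) := by
            rw [← mul_assoc, ← ENNReal.ofReal_mul (by positivity),
              show K⁻¹ * (K * 2 ^ (-(k:ℝ) * β)) = 2 ^ (-(k:ℝ) * β) by field_simp]
        _ ≤ _ := mul_le_mul' le_rfl hint
    -- overlap estimate
    have hoverlap : ∑' k : {k : ℤ // n + 1 ≤ k},
        (∫⁻ x in Ioo (xs k.1) (xs (k.1 + m)), W x ^ (β - 1) * w x * h x) ≤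
        ENNReal.ofReal (2 * m) *
          ∫⁻ x in erIoo ((xs n : ℝ) : EReal) b, W x ^ (β - 1) * w x * h x := by
      have h1 : ∀ k : {k : ℤ // n + 1 ≤ k},
          (∫⁻ x in Ioo (xs k.1) (xs (k.1 + m)), W x ^ (β - 1) * w x * h x) =
            ∫⁻ x, (Ioo (xs k.1) (xs (k.1 + m))).indicator
              (fun x => W x ^ (β - 1) * w x * h x) x := fun k =>
        (lintegral_indicator measurableSet_Ioo _).symm
      rw [tsum_congr h1, ← lintegral_tsum (fun k => (hgmeas.indicator measurableSet_Ioo).aemeasurable)]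
      rw [show (∫⁻ x in erIoo ((xs n : ℝ) : EReal) b, W x ^ (β - 1) * w x * h x) =
          ∫⁻ x, (erIoo ((xs n : ℝ) : EReal) b).indicator
            (fun x => W x ^ (β - 1) * w x * h x) x from
          (lintegral_indicator (measurableSet_erIoo _ _) _).symm,
        ← lintegral_const_mul _ (hgmeas.indicator (measurableSet_erIoo _ _))]
      apply lintegral_mono
      intro x
      dsimp only
      by_cases hex : ∃ k : {k : ℤ // n + 1 ≤ k}, x ∈ Ioo (xs k.1) (xs (k.1 + m))
      · obtain ⟨k₀, hk₀⟩ := hex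
        have hxmem : x ∈ erIoo ((xs n : ℝ) : EReal) b := by
          constructor
          · exact_mod_cast lt_of_le_of_lt (hmono_le n k₀.1 hn (by omega)) hk₀.1
          · exact lt_of_lt_of_le (by exact_mod_cast hk₀.2)
              (hmem (k₀.1 + m) (hNk _ (by omega))).2
        rw [Set.indicator_of_mem hxmem]
        set s : Finset {k : ℤ // n + 1 ≤ k} :=
          (Finset.Ioo (k₀.1 - m) (k₀.1 + m)).subtype _ with hsdef
        have hzero : ∀ k ∉ s, (Ioo (xs k.1) (xs (k.1 + m))).indicator
            (fun x => W x ^ (β - 1) * w x * h x) x = 0 := by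
          intro k hks
          apply Set.indicator_of_notMem
          intro hxk
          apply hks
          rw [hsdef, Finset.mem_subtype, Finset.mem_Ioo]
          constructor
          · by_contra hcon
            push_neg at hcon
            have hle : xs (k.1 + m) ≤ xs k₀.1 := hmono_le _ _ (hNk _ (by omega)) (by omega)
            exact absurd (lt_trans hk₀.1 (lt_of_lt_of_le hxk.2 hle)) (lt_irrefl _)
          · by_contra hcon
            push_neg at hcon
            have hle : xs (k₀.1 + m) ≤ xs k.1 := hmono_le _ _ (hNk _ (by omega)) (by omega)
            exact absurd (lt_trans hxk.1 (lt_of_lt_of_le hk₀.2 hle)) (lt_irrefl _)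
        rw [tsum_eq_sum hzero]
        have hcard : s.card ≤ 2 * m := by
          calc s.card ≤ (Finset.Ioo (k₀.1 - m) (k₀.1 + m)).card := by
                rw [hsdef, Finset.card_subtype]
                exact Finset.card_filter_le _ _
            _ = (k₀.1 + m - (k₀.1 - m) - 1).toNat := Int.card_Ioo _ _
            _ ≤ 2 * m := by omega
        have hcast : ((s.card : ℝ≥0∞)) ≤ ENNReal.ofReal (2 * m) := by
          rw [show ((2:ℝ) * m) = ((2 * m : ℕ) : ℝ) by push_cast; ring, ENNReal.ofReal_natCast]
          exact_mod_cast hcard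
        calc ∑ k ∈ s, (Ioo (xs k.1) (xs (k.1 + m))).indicator
              (fun x => W x ^ (β - 1) * w x * h x) x
            ≤ ∑ _k ∈ s, W x ^ (β - 1) * w x * h x :=
              Finset.sum_le_sum (fun k _ => Set.indicator_le_self _ _ x)
          _ = s.card • (W x ^ (β - 1) * w x * h x) := Finset.sum_const _
          _ = (s.card : ℝ≥0∞) * (W x ^ (β - 1) * w x * h x) := nsmul_eq_mul _ _
          _ ≤ _ := mul_le_mul' hcast le_rfl
      · push_neg at hex
        have hall : ∀ k : {k : ℤ // n + 1 ≤ k}, (Ioo (xs k.1) (xs (k.1 + m))).indicator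
            (fun x => W x ^ (β - 1) * w x * h x) x = 0 := fun k =>
          Set.indicator_of_notMem (hex k) _
        rw [tsum_congr hall, tsum_zero]
        exact zero_le
    -- combine
    calc ENNReal.ofReal (K⁻¹ * (2 * m))⁻¹ *
          ∑' k : {k : ℤ // n + 1 ≤ k}, (2 : ℝ≥0∞) ^ (-((k : ℤ) : ℝ) * β) * h (xs k)
        ≤ ENNReal.ofReal (K⁻¹ * (2 * m))⁻¹ *
          ∑' k : {k : ℤ // n + 1 ≤ k}, ENNReal.ofReal K⁻¹ *
            ∫⁻ x in Ioo (xs k.1) (xs (k.1 + m)), W x ^ (β - 1) * w x * h x := by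
          refine mul_le_mul' le_rfl (ENNReal.tsum_le_tsum fun k => ?_)
          rw [two2]
          exact lower_piece k.1 k.2
      _ = ENNReal.ofReal (K⁻¹ * (2 * m))⁻¹ * (ENNReal.ofReal K⁻¹ *
          ∑' k : {k : ℤ // n + 1 ≤ k},
            ∫⁻ x in Ioo (xs k.1) (xs (k.1 + m)), W x ^ (β - 1) * w x * h x) := by
          rw [ENNReal.tsum_mul_left]
      _ ≤ ENNReal.ofReal (K⁻¹ * (2 * m))⁻¹ * (ENNReal.ofReal K⁻¹ * (ENNReal.ofReal (2 * m) *
          ∫⁻ x in erIoo ((xs n : ℝ) : EReal) b, W x ^ (β - 1) * w x * h x)) :=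
          mul_le_mul' le_rfl (mul_le_mul' le_rfl hoverlap)
      _ = (ENNReal.ofReal (K⁻¹ * (2 * m))⁻¹ * (ENNReal.ofReal K⁻¹ * ENNReal.ofReal (2 * m))) *
          ∫⁻ x in erIoo ((xs n : ℝ) : EReal) b, W x ^ (β - 1) * w x * h x := by
          ring
      _ = ENNReal.ofReal ((K⁻¹ * (2 * m))⁻¹ * (K⁻¹ * (2 * m))) *
          ∫⁻ x in erIoo ((xs n : ℝ) : EReal) b, W x ^ (β - 1) * w x * h x := by
          rw [← ENNReal.ofReal_mul (by positivity), ← ENNReal.ofReal_mul (by positivity)]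
      _ = ∫⁻ x in erIoo ((xs n : ℝ) : EReal) b, W x ^ (β - 1) * w x * h x := by
          rw [inv_mul_cancel₀ (by positivity), ENNReal.ofReal_one, one_mul]
  · -- UPPER BOUND
    have upper_piece : ∀ k : ℤ, n ≤ k →
        (∫⁻ x in Ioo (xs k) (xs (k + 1)), W x ^ (β - 1) * w x * h x) ≤
          ENNReal.ofReal (D₂ * c₂ * 2 ^ β) *
            (ENNReal.ofReal (2 ^ (-((k:ℝ) + 1) * β)) * h (xs (k + 1))) := by
      intro k hk
      have hNk' : N ≤ (k : WithBot ℤ) := hNk k hk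
      have hNk1 : N ≤ ((k + 1 : ℤ) : WithBot ℤ) := hNk _ (by omega)
      have hcast1 : (((k + 1 : ℤ)) : ℝ) = (k:ℝ) + 1 := by push_cast; ring
      have hmem1 : xs (k + 1) ∈ erIoo (a : EReal) b := hmemk (k + 1) (by omega)
      have hpt : ∀ x ∈ Ioo (xs k) (xs (k + 1)),
          W x ^ (β - 1) * w x * h x ≤
            (ENNReal.ofReal (D₂ * 2 ^ (-(k:ℝ) * (β - 1))) * h (xs (k + 1))) * w x := by
        intro x hx
        have hxab : x ∈ erIoo (a : EReal) b := hx_mem k (k + 1) hk (by omega) x hx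
        have hWle : W x ≤ ENNReal.ofReal (c₂ * 2 ^ (-(k:ℝ))) :=
          le_trans (hWanti hx.1.le) (hWhigh k hNk')
        have hWge : ENNReal.ofReal ((c₁ / 2) * 2 ^ (-(k:ℝ))) ≤ W x := by
          refine le_trans ?_ (hWanti hx.2.le)
          have h1 := hWlow (k + 1) hNk1
          rw [hcast1] at h1
          refine le_trans (le_of_eq ?_) h1
          rw [show -((k:ℝ) + 1) = -1 + -(k:ℝ) by ring, Real.rpow_add two_pos,
            Real.rpow_neg_one]
          ring_nf
        have hWr : W x ^ (β - 1) ≤ ENNReal.ofReal (D₂ * 2 ^ (-(k:ℝ) * (β - 1))) := by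
          refine le_trans (rpow_upper (by positivity) (by positivity) hWge hWle) ?_
          apply ENNReal.ofReal_le_ofReal
          apply max_le
          · rw [real_split _ (by positivity)]
            exact mul_le_mul_of_nonneg_right
              (by rw [hD₂def]; exact le_max_left _ _) (by positivity)
          · rw [real_split _ hc₂.le]
            exact mul_le_mul_of_nonneg_right
              (by rw [hD₂def]; exact le_max_right _ _) (by positivity)
        have hhx : h x ≤ h (xs (k + 1)) := hmono hxab hmem1 hx.2.le
        calc W x ^ (β - 1) * w x * h x = (W x ^ (β - 1) * h x) * w x := by ring
          _ ≤ (ENNReal.ofReal (D₂ * 2 ^ (-(k:ℝ) * (β - 1))) * h (xs (k + 1))) * w x :=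
            mul_le_mul' (mul_le_mul' hWr hhx) le_rfl
      have hIsub : Ioo (xs k) (xs (k + 1)) ⊆ erIoo ((xs k : ℝ) : EReal) b := by
        intro x hx
        exact ⟨by exact_mod_cast hx.1,
          lt_of_lt_of_le (by exact_mod_cast hx.2) (hmem (k + 1) hNk1).2⟩
      have hre : D₂ * 2 ^ (-(k:ℝ) * (β - 1)) * (c₂ * 2 ^ (-(k:ℝ))) =
          D₂ * c₂ * 2 ^ β * 2 ^ (-((k:ℝ) + 1) * β) := by
        have e1 : (2:ℝ) ^ (-(k:ℝ) * (β - 1)) * (2:ℝ) ^ (-(k:ℝ)) =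
            2 ^ β * 2 ^ (-((k:ℝ) + 1) * β) := by
          rw [← Real.rpow_add two_pos, ← Real.rpow_add two_pos]; congr 1; ring
        calc D₂ * 2 ^ (-(k:ℝ) * (β - 1)) * (c₂ * 2 ^ (-(k:ℝ)))
            = D₂ * c₂ * (2 ^ (-(k:ℝ) * (β - 1)) * 2 ^ (-(k:ℝ))) := by ring
          _ = D₂ * c₂ * (2 ^ β * 2 ^ (-((k:ℝ) + 1) * β)) := by rw [e1]
          _ = D₂ * c₂ * 2 ^ β * 2 ^ (-((k:ℝ) + 1) * β) := by ring
      calc (∫⁻ x in Ioo (xs k) (xs (k + 1)), W x ^ (β - 1) * w x * h x)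
          ≤ ∫⁻ x in Ioo (xs k) (xs (k + 1)),
            (ENNReal.ofReal (D₂ * 2 ^ (-(k:ℝ) * (β - 1))) * h (xs (k + 1))) * w x :=
            setLIntegral_mono (hw.const_mul _) hpt
        _ = (ENNReal.ofReal (D₂ * 2 ^ (-(k:ℝ) * (β - 1))) * h (xs (k + 1))) *
            ∫⁻ x in Ioo (xs k) (xs (k + 1)), w x := lintegral_const_mul _ hw
        _ ≤ (ENNReal.ofReal (D₂ * 2 ^ (-(k:ℝ) * (β - 1))) * h (xs (k + 1))) *
            ENNReal.ofReal (c₂ * 2 ^ (-(k:ℝ))) :=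
            mul_le_mul' le_rfl (le_trans (lintegral_mono_set hIsub) (hWhigh k hNk'))
        _ = ENNReal.ofReal (D₂ * c₂ * 2 ^ β) *
            (ENNReal.ofReal (2 ^ (-((k:ℝ) + 1) * β)) * h (xs (k + 1))) := by
            rw [show ∀ X Y Z : ℝ≥0∞, (X * Y) * Z = (X * Z) * Y from fun X Y Z => by ring,
              ← ENNReal.ofReal_mul (by positivity), hre,
              ENNReal.ofReal_mul (by positivity)]
            ring
    have hmeasI : ∀ k : {k : ℤ // n ≤ k}, MeasurableSet (Ioo (xs k.1) (xs (k.1 + 1))) :=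
      fun _ => measurableSet_Ioo
    have hdisj : Pairwise (Function.onFun Disjoint
        (fun k : {k : ℤ // n ≤ k} => Ioo (xs k.1) (xs (k.1 + 1)))) := by
      have key : ∀ j k : {k : ℤ // n ≤ k}, j.1 < k.1 →
          Disjoint (Ioo (xs j.1) (xs (j.1 + 1))) (Ioo (xs k.1) (xs (k.1 + 1))) := by
        intro j k hjk
        apply Set.disjoint_left.2
        intro x hx1 hx2
        have hle : xs (j.1 + 1) ≤ xs k.1 := hmono_le _ _ (hNk _ (by omega)) (by omega)
        exact absurd (lt_trans (lt_of_lt_of_le hx1.2 hle) hx2.1) (lt_irrefl _)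
      intro j k hjk
      rcases (Subtype.coe_injective.ne hjk).lt_or_gt with hlt | hlt
      · exact key j k hlt
      · exact (key k j hlt).symm
    have hsub1 : (⋃ k : {k : ℤ // n ≤ k}, Ioo (xs k.1) (xs (k.1 + 1))) ⊆
        erIoo ((xs n : ℝ) : EReal) b := by
      intro x hx
      rw [mem_iUnion] at hx
      obtain ⟨k, hk⟩ := hx
      exact ⟨by exact_mod_cast lt_of_le_of_lt (hmono_le n k.1 hn k.2) hk.1,
        lt_of_lt_of_le (by exact_mod_cast hk.2) (hmem (k.1 + 1) (hNk _ (by omega))).2⟩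
    have hsub2 : erIoo ((xs n : ℝ) : EReal) b \
        (⋃ k : {k : ℤ // n ≤ k}, Ioo (xs k.1) (xs (k.1 + 1))) ⊆
        ⋃ k : {k : ℤ // n ≤ k}, {xs (k.1 + 1)} := by
      rintro x ⟨hxmem, hxnot⟩
      have hxn : xs n < x := by exact_mod_cast hxmem.1
      have haxn : (a : EReal) ≤ ((xs n : ℝ) : EReal) := by exact_mod_cast (hmem n hn).1
      have hxab : x ∈ erIoo (a : EReal) b := ⟨lt_of_le_of_lt haxn hxmem.1, hxmem.2⟩
      have hex : ∃ j : ℕ, x ≤ xs (n + 1 + j) := by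
        by_contra hcon
        push_neg at hcon
        have hWx := hW x hxab
        have hWfin : W x ≠ ⊤ := hWx.2.ne
        have hWpos : 0 < (W x).toReal := ENNReal.toReal_pos hWx.1.ne' hWfin
        obtain ⟨j, hj⟩ := exists_pow_lt_of_lt_one
          (div_pos hWpos (by positivity : (0:ℝ) < c₂ * 2 ^ (-((n:ℝ) + 1))))
          (by norm_num : (1:ℝ)/2 < 1)
        have h1 : W x ≤ ENNReal.ofReal (c₂ * 2 ^ (-((n:ℝ) + 1 + (j:ℝ)))) := by
          refine le_trans (hWanti (hcon j).le) ?_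
          have h2 := hWhigh (n + 1 + j) (hNk _ (by omega))
          rwa [show (((n + 1 + (j:ℤ)) : ℤ) : ℝ) = (n:ℝ) + 1 + (j:ℝ) by push_cast; ring] at h2
        have he : (2:ℝ) ^ (-((n:ℝ) + 1 + (j:ℝ))) = 2 ^ (-((n:ℝ) + 1)) * ((1:ℝ)/2) ^ j := by
          rw [show -((n:ℝ) + 1 + (j:ℝ)) = -((n:ℝ) + 1) + -(j:ℝ) by ring,
            Real.rpow_add two_pos, Real.rpow_neg (by norm_num : (0:ℝ) ≤ 2) (j:ℝ),
            Real.rpow_natCast]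
          rw [one_div, inv_pow]
        have h2 : c₂ * 2 ^ (-((n:ℝ) + 1 + (j:ℝ))) < (W x).toReal := by
          rw [he]
          calc c₂ * (2 ^ (-((n:ℝ) + 1)) * ((1:ℝ)/2) ^ j)
              = (c₂ * 2 ^ (-((n:ℝ) + 1))) * ((1:ℝ)/2) ^ j := by ring
            _ < (c₂ * 2 ^ (-((n:ℝ) + 1))) * ((W x).toReal / (c₂ * 2 ^ (-((n:ℝ) + 1)))) :=
              mul_lt_mul_of_pos_left hj (by positivity)
            _ = (W x).toReal := by field_simp
        have h3 : ENNReal.ofReal (c₂ * 2 ^ (-((n:ℝ) + 1 + (j:ℝ)))) < W x := by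
          rw [← ENNReal.ofReal_toReal hWfin]
          exact (ENNReal.ofReal_lt_ofReal_iff hWpos).2 h2
        exact absurd h1 (not_le.2 h3)
      have hj₀ : x ≤ xs (n + 1 + (Nat.find hex : ℕ)) := Nat.find_spec hex
      have hlt : xs (n + (Nat.find hex : ℕ)) < x := by
        rcases Nat.eq_zero_or_pos (Nat.find hex) with h0 | h0
        · rw [h0]; simpa using hxn
        · have h4 := Nat.find_min hex (m := Nat.find hex - 1) (by omega)
          push_neg at h4
          rwa [show n + 1 + ((Nat.find hex - 1 : ℕ) : ℤ) = n + (Nat.find hex : ℕ) by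
            push_cast; omega] at h4
      rcases eq_or_lt_of_le hj₀ with heq | hlt2
      · refine mem_iUnion.2 ⟨⟨n + (Nat.find hex : ℕ), by omega⟩, ?_⟩
        show x ∈ ({xs (n + ((Nat.find hex : ℕ) : ℤ) + 1)} : Set ℝ)
        rw [mem_singleton_iff, show n + ((Nat.find hex : ℕ) : ℤ) + 1
          = n + 1 + ((Nat.find hex : ℕ) : ℤ) by ring]
        exact heq
      · apply absurd _ hxnot
        refine mem_iUnion.2 ⟨⟨n + (Nat.find hex : ℕ), by omega⟩, ?_⟩
        show x ∈ Ioo (xs (n + ((Nat.find hex : ℕ) : ℤ)))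
          (xs (n + ((Nat.find hex : ℕ) : ℤ) + 1))
        refine Set.mem_Ioo.2 ⟨hlt, ?_⟩
        rwa [show n + ((Nat.find hex : ℕ) : ℤ) + 1 = n + 1 + ((Nat.find hex : ℕ) : ℤ) by ring]
    have hcover : erIoo ((xs n : ℝ) : EReal) b =ᵐ[volume]
        ⋃ k : {k : ℤ // n ≤ k}, Ioo (xs k.1) (xs (k.1 + 1)) := by
      rw [MeasureTheory.ae_eq_set]
      constructor
      · exact measure_mono_null hsub2
          ((Set.countable_iUnion fun k => Set.countable_singleton _).measure_zero _)
      · rw [Set.diff_eq_empty.2 hsub1]; exact measure_empty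
    rw [setLIntegral_congr hcover, lintegral_iUnion hmeasI hdisj]
    calc ∑' k : {k : ℤ // n ≤ k}, ∫⁻ x in Ioo (xs k.1) (xs (k.1 + 1)), W x ^ (β - 1) * w x * h x
        ≤ ∑' k : {k : ℤ // n ≤ k}, ENNReal.ofReal (D₂ * c₂ * 2 ^ β) *
            (ENNReal.ofReal (2 ^ (-((k.1:ℝ) + 1) * β)) * h (xs (k.1 + 1))) :=
          ENNReal.tsum_le_tsum fun k => upper_piece k.1 k.2
      _ = ENNReal.ofReal (D₂ * c₂ * 2 ^ β) * ∑' k : {k : ℤ // n ≤ k},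
            ENNReal.ofReal (2 ^ (-((k.1:ℝ) + 1) * β)) * h (xs (k.1 + 1)) :=
          ENNReal.tsum_mul_left
      _ = ENNReal.ofReal (D₂ * c₂ * 2 ^ β) * ∑' k : {k : ℤ // n + 1 ≤ k},
            (2:ℝ≥0∞) ^ (-((k.1:ℤ):ℝ) * β) * h (xs k.1) := by
          congr 1
          have heqv := Equiv.tsum_eq
            ((⟨fun k : {k : ℤ // n + 1 ≤ k} => (⟨k.1 - 1, by omega⟩ : {k : ℤ // n ≤ k}),
              fun k : {k : ℤ // n ≤ k} => (⟨k.1 + 1, by omega⟩ : {k : ℤ // n + 1 ≤ k}),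
              fun k => by apply Subtype.ext; simp,
              fun k => by apply Subtype.ext; simp⟩ :
              {k : ℤ // n + 1 ≤ k} ≃ {k : ℤ // n ≤ k}))
            (fun k : {k : ℤ // n ≤ k} =>
              ENNReal.ofReal (2 ^ (-((k.1:ℝ) + 1) * β)) * h (xs (k.1 + 1)))
          rw [← heqv]
          apply tsum_congr
          intro j
          simp only [Equiv.coe_fn_mk]
          have h1 : ((j.1 - 1 : ℤ) : ℝ) + 1 = (j.1 : ℝ) := by push_cast; ring
          have h2 : (j.1 - 1 : ℤ) + 1 = j.1 := by ring
          rw [h2, h1, two2]
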